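/- arXiv:0707.1417 — 3 statements merged into one kernel-verified Lean document; each statement's English description precedes it below -/
import Mathlib

section
/- Let d ≥ 1, let C = (C_1,…,C_d) be a coisometric row contraction on H_C and let E with block operators E_i = [[C_i, 0],[B_i, A_i]] on H_E = H_C ⊕ H_A be a coisometric lifting of C by a row contraction A. Then for every h ∈ H_A one has ‖B* h‖ = ‖D_{*,A} h‖, where B* : H_A → ⊕^d H_C is the column operator with components B_i*, and B* h lies in the kernel of the row operator of C. Consequently there exists a (unique) linear isometry γ from the defect space cl(ran D_{*,A}) ⊆ H_A into ker(row operator of C) ⊆ ⊕^d H_C such that γ(D_{*,A} h) = B* h for all h ∈ H_A. -/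
set_option synthInstance.maxHeartbeats 1000000
set_option maxHeartbeats 1000000
noncomputable section

open ContinuousLinearMap

variable {d : ℕ}
variable {H : Type*} [NormedAddCommGroup H] [InnerProductSpace ℂ H] [CompleteSpace H]

/-- The map Φ_T(X) = ∑ T_i X T_i^*. -/
def cpMap (T : Fin d → H →L[ℂ] H) (X : H →L[ℂ] H) : H →L[ℂ] H :=
  ∑ i, T i ∘L X ∘L adjoint (T i)

/-- Row contraction: ∑ T_i T_i^* ≤ 1. -/
def IsRowContraction (T : Fin d → H →L[ℂ] H) : Prop :=
  ∑ i, T i ∘L adjoint (T i) ≤ 1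

/-- The defect operator of T^*: D_{*,T} = (1 - ∑ T_i T_i^*)^(1/2). -/
def defectStar (T : Fin d → H →L[ℂ] H) : H →L[ℂ] H :=
  CFC.sqrt (1 - ∑ i, T i ∘L adjoint (T i))

/-- product T_α = T_{α₁} ⋯ T_{αₙ} over a word α. -/
def opWord (T : Fin d → H →L[ℂ] H) (α : List (Fin d)) : H →L[ℂ] H :=
  (α.map T).prod

/-- *-stable row contraction. -/
def IsStarStable (T : Fin d → H →L[ℂ] H) : Prop :=
  ∀ h : H, Filter.Tendsto
    (fun n : ℕ => ∑ α : Fin n → Fin d, ‖adjoint (opWord T (List.ofFn α)) h‖ ^ 2)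
    Filter.atTop (nhds 0)

instance piLpCompleteSpace {ι : Type*} (G : ι → Type*) [∀ i, NormedAddCommGroup (G i)]
    [∀ i, CompleteSpace (G i)] : CompleteSpace (PiLp 2 G) :=
  inferInstance

section Row

variable (d)

/-- The row operator of a tuple. -/
def rowOp (T : Fin d → H →L[ℂ] H) : PiLp 2 (fun _ : Fin d => H) →L[ℂ] H :=
  ∑ i, (T i) ∘L (ContinuousLinearMap.proj i) ∘L
    (PiLp.continuousLinearEquiv 2 ℂ (fun _ : Fin d => H)).toContinuousLinearMap

/-- The column operator with components (B i)^*. -/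
def colAdj {G : Type*} [NormedAddCommGroup G] [InnerProductSpace ℂ G] [CompleteSpace G]
    (B : Fin d → H →L[ℂ] G) : G →L[ℂ] PiLp 2 (fun _ : Fin d => H) :=
  ((PiLp.continuousLinearEquiv 2 ℂ (fun _ : Fin d => H)).symm.toContinuousLinearMap) ∘L
    (ContinuousLinearMap.pi (fun i => adjoint (B i)))

/-- The defect operator D_T = (1 - T^* T)^(1/2) of the row operator. -/
def defectRow (T : Fin d → H →L[ℂ] H) :
    PiLp 2 (fun _ : Fin d => H) →L[ℂ] PiLp 2 (fun _ : Fin d => H) :=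
  CFC.sqrt (1 - adjoint (rowOp d T) ∘L rowOp d T)

end Row

section Block

variable (HC HA : Type*) [NormedAddCommGroup HC] [InnerProductSpace ℂ HC] [CompleteSpace HC]
  [NormedAddCommGroup HA] [InnerProductSpace ℂ HA] [CompleteSpace HA]

/-- The Hilbert space direct sum H_C ⊕ H_A. -/
abbrev HilbSum := WithLp 2 (HC × HA)

variable {HC HA}

/-- The block operator [[X₁₁, X₁₂],[X₂₁, X₂₂]] on H_C ⊕ H_A. -/
def blockOp (X11 : HC →L[ℂ] HC) (X12 : HA →L[ℂ] HC)
    (X21 : HC →L[ℂ] HA) (X22 : HA →L[ℂ] HA) :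
    HilbSum HC HA →L[ℂ] HilbSum HC HA :=
  ((WithLp.prodContinuousLinearEquiv 2 ℂ HC HA).symm.toContinuousLinearMap) ∘L
    ((X11 ∘L fst ℂ HC HA + X12 ∘L snd ℂ HC HA).prod
      (X21 ∘L fst ℂ HC HA + X22 ∘L snd ℂ HC HA)) ∘L
    ((WithLp.prodContinuousLinearEquiv 2 ℂ HC HA).toContinuousLinearMap)

/-- Compression of an operator on H_C ⊕ H_A to H_C. -/
def comprC (X : HilbSum HC HA →L[ℂ] HilbSum HC HA) : HC →L[ℂ] HC :=
  (fst ℂ HC HA) ∘L ((WithLp.prodContinuousLinearEquiv 2 ℂ HC HA).toContinuousLinearMap) ∘L X ∘L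
    ((WithLp.prodContinuousLinearEquiv 2 ℂ HC HA).symm.toContinuousLinearMap) ∘L (inl ℂ HC HA)

end Block


/-- The i-th coordinate projection of the d-fold Hilbert space direct sum. -/
def projPiLp {H : Type*} [NormedAddCommGroup H] [InnerProductSpace ℂ H] [CompleteSpace H]
    {d : ℕ} (i : Fin d) : PiLp 2 (fun _ : Fin d => H) →L[ℂ] H :=
  (ContinuousLinearMap.proj i) ∘L
    (PiLp.continuousLinearEquiv 2 ℂ (fun _ : Fin d => H)).toContinuousLinearMap

variable {HC HA : Type*} [NormedAddCommGroup HC] [InnerProductSpace ℂ HC] [CompleteSpace HC]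
  [NormedAddCommGroup HA] [InnerProductSpace ℂ HA] [CompleteSpace HA]


section Aux

variable {HC HA : Type*} [NormedAddCommGroup HC] [InnerProductSpace ℂ HC] [CompleteSpace HC]
  [NormedAddCommGroup HA] [InnerProductSpace ℂ HA] [CompleteSpace HA]

lemma blockOp_fst (X11 : HC →L[ℂ] HC) (X12 : HA →L[ℂ] HC)
    (X21 : HC →L[ℂ] HA) (X22 : HA →L[ℂ] HA) (x : HilbSum HC HA) :
    (blockOp X11 X12 X21 X22 x).fst = X11 x.fst + X12 x.snd := rfl

lemma blockOp_snd (X11 : HC →L[ℂ] HC) (X12 : HA →L[ℂ] HC)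
    (X21 : HC →L[ℂ] HA) (X22 : HA →L[ℂ] HA) (x : HilbSum HC HA) :
    (blockOp X11 X12 X21 X22 x).snd = X21 x.fst + X22 x.snd := rfl

lemma adjoint_blockOp (X11 : HC →L[ℂ] HC) (X12 : HA →L[ℂ] HC)
    (X21 : HC →L[ℂ] HA) (X22 : HA →L[ℂ] HA) :
    adjoint (blockOp X11 X12 X21 X22)
      = blockOp (adjoint X11) (adjoint X21) (adjoint X12) (adjoint X22) := by
  symm
  rw [ContinuousLinearMap.eq_adjoint_iff]
  intro x y
  simp only [WithLp.prod_inner_apply, WithLp.ofLp_fst, WithLp.ofLp_snd, blockOp_fst, blockOp_snd, inner_add_left,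
    inner_add_right, adjoint_inner_left]
  ring


lemma lift_eqs {d : ℕ} (C : Fin d → HC →L[ℂ] HC) (A : Fin d → HA →L[ℂ] HA)
    (B : Fin d → HC →L[ℂ] HA)
    (hE : ∑ i, blockOp (C i) 0 (B i) (A i) ∘L adjoint (blockOp (C i) 0 (B i) (A i)) = 1)
    (h : HA) :
    (∑ i, C i (adjoint (B i) h) = 0) ∧
      (∑ i, B i (adjoint (B i) h) = h - ∑ i, A i (adjoint (A i) h)) := by
  set v : HilbSum HC HA := (WithLp.equiv 2 (HC × HA)).symm (0, h) with hv_def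
  have hv : ∑ i, (blockOp (C i) 0 (B i) (A i))
      ((adjoint (blockOp (C i) 0 (B i) (A i))) v) = v := by
    have := congrArg (fun T : HilbSum HC HA →L[ℂ] HilbSum HC HA => T v) hE
    simpa [ContinuousLinearMap.sum_apply] using this
  constructor
  · have h1 := congrArg (fun x : HilbSum HC HA =>
      ((fst ℂ HC HA) ∘L (WithLp.prodContinuousLinearEquiv 2 ℂ HC HA).toContinuousLinearMap) x) hv
    simp only [map_sum] at h1
    have h2 : ∀ i, ((fst ℂ HC HA) ∘L
        (WithLp.prodContinuousLinearEquiv 2 ℂ HC HA).toContinuousLinearMap)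
        ((blockOp (C i) 0 (B i) (A i)) ((adjoint (blockOp (C i) 0 (B i) (A i))) v))
        = C i (adjoint (B i) h) := by
      intro i
      show ((blockOp (C i) 0 (B i) (A i)) ((adjoint (blockOp (C i) 0 (B i) (A i))) v)).fst
        = C i (adjoint (B i) h)
      rw [adjoint_blockOp, blockOp_fst, blockOp_fst, blockOp_snd]
      have hf : v.fst = 0 := rfl
      have hs : v.snd = h := rfl
      simp [hf, hs]
    rw [Finset.sum_congr rfl (fun i _ => h2 i)] at h1
    simpa [show WithLp.fst v = 0 from rfl] using h1
  · have h1 := congrArg (fun x : HilbSum HC HA =>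
      ((snd ℂ HC HA) ∘L (WithLp.prodContinuousLinearEquiv 2 ℂ HC HA).toContinuousLinearMap) x) hv
    simp only [map_sum] at h1
    have h2 : ∀ i, ((snd ℂ HC HA) ∘L
        (WithLp.prodContinuousLinearEquiv 2 ℂ HC HA).toContinuousLinearMap)
        ((blockOp (C i) 0 (B i) (A i)) ((adjoint (blockOp (C i) 0 (B i) (A i))) v))
        = B i (adjoint (B i) h) + A i (adjoint (A i) h) := by
      intro i
      show ((blockOp (C i) 0 (B i) (A i)) ((adjoint (blockOp (C i) 0 (B i) (A i))) v)).snd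
        = B i (adjoint (B i) h) + A i (adjoint (A i) h)
      rw [adjoint_blockOp, blockOp_snd, blockOp_fst, blockOp_snd]
      have hf : v.fst = 0 := rfl
      have hs : v.snd = h := rfl
      simp [hf, hs]
    rw [Finset.sum_congr rfl (fun i _ => h2 i)] at h1
    have h3 : ((snd ℂ HC HA) ∘L
        (WithLp.prodContinuousLinearEquiv 2 ℂ HC HA).toContinuousLinearMap) v = h := rfl
    rw [h3, Finset.sum_add_distrib] at h1
    linear_combination (norm := abel) h1


lemma colAdj_apply {d : ℕ} (B : Fin d → HC →L[ℂ] HA) (h : HA) (i : Fin d) :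
    colAdj d B h i = adjoint (B i) h := rfl

lemma defectStar_selfAdjoint (A : Fin d → HA →L[ℂ] HA) :
    adjoint (defectStar A) = defectStar A := by
  have : IsSelfAdjoint (defectStar A) := IsSelfAdjoint.of_nonneg (CFC.sqrt_nonneg _)
  rw [← ContinuousLinearMap.star_eq_adjoint]
  exact this

lemma defectStar_sq {d : ℕ} (A : Fin d → HA →L[ℂ] HA) (hA : IsRowContraction A) (h : HA) :
    defectStar A (defectStar A h) = h - ∑ i, A i (adjoint (A i) h) := by
  have hpos : (0 : HA →L[ℂ] HA) ≤ 1 - ∑ i, A i ∘L adjoint (A i) := sub_nonneg.mpr hA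
  have h1 := CFC.sqrt_mul_sqrt_self (1 - ∑ i, A i ∘L adjoint (A i)) hpos
  have h2 := congrArg (fun T : HA →L[ℂ] HA => T h) h1
  simpa [ContinuousLinearMap.mul_apply, defectStar, ContinuousLinearMap.sub_apply,
    ContinuousLinearMap.sum_apply] using h2

lemma norm_colAdj_eq {d : ℕ} (C : Fin d → HC →L[ℂ] HC) (A : Fin d → HA →L[ℂ] HA)
    (B : Fin d → HC →L[ℂ] HA) (hA : IsRowContraction A)
    (hE : ∑ i, blockOp (C i) 0 (B i) (A i) ∘L adjoint (blockOp (C i) 0 (B i) (A i)) = 1)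
    (h : HA) : ‖colAdj d B h‖ = ‖defectStar A h‖ := by
  have hbb := (lift_eqs C A B hE h).2
  have key : (inner ℂ (colAdj d B h) (colAdj d B h) : ℂ)
      = (inner ℂ (defectStar A h) (defectStar A h) : ℂ) := by
    calc (inner ℂ (colAdj d B h) (colAdj d B h) : ℂ)
        = ∑ i, (inner ℂ (adjoint (B i) h) (adjoint (B i) h) : ℂ) := by
          rw [PiLp.inner_apply]
          rfl
      _ = ∑ i, (inner ℂ h (B i (adjoint (B i) h)) : ℂ) := by
          refine Finset.sum_congr rfl fun i _ => ?_
          rw [adjoint_inner_left]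
      _ = (inner ℂ h (∑ i, B i (adjoint (B i) h)) : ℂ) := (inner_sum _ _ _).symm
      _ = (inner ℂ h (defectStar A (defectStar A h)) : ℂ) := by
          rw [hbb, defectStar_sq A hA]
      _ = (inner ℂ (adjoint (defectStar A) h) (defectStar A h) : ℂ) :=
          (adjoint_inner_left _ _ _).symm
      _ = (inner ℂ (defectStar A h) (defectStar A h) : ℂ) := by rw [defectStar_selfAdjoint]
  have key2 : ‖colAdj d B h‖ ^ 2 = ‖defectStar A h‖ ^ 2 := by
    have := congrArg (fun z : ℂ => RCLike.re z) key
    beta_reduce at this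
    rwa [inner_self_eq_norm_sq, inner_self_eq_norm_sq] at this
  have := congrArg Real.sqrt key2
  simpa [Real.sqrt_sq, norm_nonneg] using this

lemma colAdj_mem_ker {d : ℕ} (C : Fin d → HC →L[ℂ] HC) (A : Fin d → HA →L[ℂ] HA)
    (B : Fin d → HC →L[ℂ] HA)
    (hE : ∑ i, blockOp (C i) 0 (B i) (A i) ∘L adjoint (blockOp (C i) 0 (B i) (A i)) = 1)
    (h : HA) : colAdj d B h ∈ LinearMap.ker (rowOp d C : PiLp 2 (fun _ : Fin d => HC) →ₗ[ℂ] HC) := by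
  have h1 := (lift_eqs C A B hE h).1
  have : rowOp d C (colAdj d B h) = ∑ i, C i (adjoint (B i) h) := by
    simp [rowOp, ContinuousLinearMap.sum_apply]
    rfl
  simpa [LinearMap.mem_ker, this] using h1

end Aux



/-- for a coisometric lifting, `‖B* h‖ = ‖D_{*,A} h‖`, `B* h ∈ ker(row C)`,
and there is a unique linear isometry `γ` from `cl(ran D_{*,A})` into `ker(row C)`
with `γ (D_{*,A} h) = B* h`. -/
theorem stmt2 {d : ℕ} (hd : 1 ≤ d)
    (C : Fin d → HC →L[ℂ] HC) (A : Fin d → HA →L[ℂ] HA) (B : Fin d → HC →L[ℂ] HA)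
    (hC : ∑ i, C i ∘L adjoint (C i) = 1) (hA : IsRowContraction A)
    (hErow : IsRowContraction (fun i => blockOp (C i) 0 (B i) (A i)))
    (hE : ∑ i, blockOp (C i) 0 (B i) (A i) ∘L adjoint (blockOp (C i) 0 (B i) (A i)) = 1) :
    (∀ h : HA, ‖colAdj d B h‖ = ‖defectStar A h‖ ∧ colAdj d B h ∈
      LinearMap.ker (rowOp d C : PiLp 2 (fun _ : Fin d => HC) →ₗ[ℂ] HC)) ∧
    (∃! γ : ↥((LinearMap.range (defectStar A : HA →ₗ[ℂ] HA)).topologicalClosure) →ₗᵢ[ℂ]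
        PiLp 2 (fun _ : Fin d => HC),
      (∀ v, γ v ∈ LinearMap.ker (rowOp d C : PiLp 2 (fun _ : Fin d => HC) →ₗ[ℂ] HC)) ∧
      (∀ h : HA, γ ⟨defectStar A h,
          Submodule.le_topologicalClosure _ ⟨h, rfl⟩⟩ = colAdj d B h)) := by
  have part1 : ∀ h : HA, ‖colAdj d B h‖ = ‖defectStar A h‖ ∧
      colAdj d B h ∈ LinearMap.ker (rowOp d C : PiLp 2 (fun _ : Fin d => HC) →ₗ[ℂ] HC) :=
    fun h => ⟨norm_colAdj_eq C A B hA hE h, colAdj_mem_ker C A B hE h⟩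
  refine ⟨part1, ?_⟩
  set D := defectStar A with hD
  set K := LinearMap.range (D : HA →ₗ[ℂ] HA) with hK
  set S := K.topologicalClosure with hS
  have key : ∀ h h' : HA, D h = D h' → colAdj d B h = colAdj d B h' := by
    intro h h' he
    have h0 : ‖colAdj d B (h - h')‖ = 0 := by
      rw [(part1 (h - h')).1]
      show ‖D (h - h')‖ = 0
      rw [map_sub, he, sub_self, norm_zero]
    have h1 := norm_eq_zero.mp h0
    rw [map_sub] at h1
    exact sub_eq_zero.mp h1
  have hval : ∀ v : ↥K, D v.2.choose = (v : HA) := fun v => v.2.choose_spec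
  let γ₀ : ↥K →ₗ[ℂ] PiLp 2 (fun _ : Fin d => HC) :=
    { toFun := fun v => colAdj d B v.2.choose
      map_add' := by
        intro u v
        rw [← map_add]
        apply key
        rw [hval, map_add, hval, hval]
        rfl
      map_smul' := by
        intro c v
        simp only [RingHom.id_apply]
        rw [← map_smul]
        apply key
        rw [hval, map_smul, hval]
        rfl }
  have hγ₀D : ∀ h : HA, γ₀ ⟨D h, ⟨h, rfl⟩⟩ = colAdj d B h := by
    intro h
    apply key
    exact hval ⟨D h, ⟨h, rfl⟩⟩
  have hγ₀norm : ∀ v : ↥K, ‖γ₀ v‖ = ‖v‖ := by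
    intro v
    show ‖colAdj d B v.2.choose‖ = ‖v‖
    rw [(part1 _).1]
    show ‖D v.2.choose‖ = ‖v‖
    rw [hval]
    rfl
  let γ₀ᵢ : ↥K →ₗᵢ[ℂ] PiLp 2 (fun _ : Fin d => HC) := ⟨γ₀, hγ₀norm⟩
  let ι : ↥K →ₗᵢ[ℂ] ↥S :=
    ⟨Submodule.inclusion (Submodule.le_topologicalClosure K), fun x => rfl⟩
  let e : ↥K →L[ℂ] ↥S := ι.toContinuousLinearMap
  have h_dense : DenseRange e := by
    intro x
    rw [closure_subtype]
    have himg : (Subtype.val '' Set.range e) = (K : Set HA) := by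
      ext y
      constructor
      · rintro ⟨z, ⟨u, rfl⟩, rfl⟩
        exact u.2
      · intro hy
        exact ⟨e ⟨y, hy⟩, ⟨⟨y, hy⟩, rfl⟩, rfl⟩
    rw [himg, ← Submodule.topologicalClosure_coe]
    exact x.2
  have h_ui : IsUniformInducing e := ι.isometry.isUniformInducing
  let γ' : ↥S →L[ℂ] PiLp 2 (fun _ : Fin d => HC) :=
    (γ₀ᵢ.toContinuousLinearMap).extend e
  have hγ'e : ∀ u : ↥K, γ' (e u) = γ₀ u := fun u =>
    ContinuousLinearMap.extend_eq _ h_dense h_ui _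
  have hγ'norm : ∀ x : ↥S, ‖γ' x‖ = ‖x‖ := by
    intro x
    refine h_dense.induction_on x
      (isClosed_eq (continuous_norm.comp γ'.continuous) continuous_norm) (fun u => ?_)
    rw [hγ'e]
    rw [hγ₀norm]
    rfl
  let γ : ↥S →ₗᵢ[ℂ] PiLp 2 (fun _ : Fin d => HC) := ⟨γ'.toLinearMap, hγ'norm⟩
  have hker : ∀ v : ↥S, γ v ∈ LinearMap.ker (rowOp d C : PiLp 2 (fun _ : Fin d => HC) →ₗ[ℂ] HC) := by
    intro v
    show rowOp d C (γ' v) = 0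
    refine h_dense.induction_on v
      (isClosed_eq ((rowOp d C).continuous.comp γ'.continuous) continuous_const) (fun u => ?_)
    rw [hγ'e]
    have : γ₀ u = colAdj d B u.2.choose := rfl
    rw [this]
    exact colAdj_mem_ker C A B hE _
  have hprop : ∀ h : HA,
      γ ⟨D h, Submodule.le_topologicalClosure _ ⟨h, rfl⟩⟩ = colAdj d B h := by
    intro h
    have heq : (⟨D h, Submodule.le_topologicalClosure _ ⟨h, rfl⟩⟩ : ↥S)
        = e ⟨D h, ⟨h, rfl⟩⟩ := rfl
    show γ' _ = _
    rw [heq, hγ'e, hγ₀D]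
  refine ⟨γ, ⟨hker, hprop⟩, ?_⟩
  intro γ₂ hγ₂
  have hcomp : ⇑γ₂ ∘ ⇑e = ⇑γ ∘ ⇑e := by
    funext u
    obtain ⟨h, hh⟩ := u.2
    have hu : e u = ⟨D h, Submodule.le_topologicalClosure _ ⟨h, rfl⟩⟩ :=
      Subtype.ext hh.symm
    show γ₂ (e u) = γ (e u)
    rw [hu, hγ₂.2 h, hprop h]
  have heq := h_dense.equalizer γ₂.continuous γ.continuous hcomp
  exact LinearIsometry.ext fun x => congrFun heq x

end
end

section
/- Let d ≥ 1 and let E with block operators E_i = [[C_i, 0],[B_i, A_i]] on H_E = H_C ⊕ H_A be a coisometric lifting of the row contraction C by the row contraction A. Then A is *-stable if and only if Φ_E^n(p_C) converges to the identity in the strong operator topology as n → ∞, where p_C is the orthogonal projection of H_E onto H_C. -/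
set_option synthInstance.maxHeartbeats 1000000
set_option maxHeartbeats 1000000
noncomputable section

open ContinuousLinearMap

variable {d : ℕ}
variable {H : Type*} [NormedAddCommGroup H] [InnerProductSpace ℂ H] [CompleteSpace H]

variable {HC HA : Type*} [NormedAddCommGroup HC] [InnerProductSpace ℂ HC] [CompleteSpace HC]
  [NormedAddCommGroup HA] [InnerProductSpace ℂ HA] [CompleteSpace HA]

set_option linter.unusedSectionVars false
section BlockLemmas
variable {HC HA : Type*} [NormedAddCommGroup HC] [InnerProductSpace ℂ HC] [CompleteSpace HC]
  [NormedAddCommGroup HA] [InnerProductSpace ℂ HA] [CompleteSpace HA]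

lemma blockOp_apply_fst (X11 : HC →L[ℂ] HC) (X12 : HA →L[ℂ] HC)
    (X21 : HC →L[ℂ] HA) (X22 : HA →L[ℂ] HA) (v : HilbSum HC HA) :
    (blockOp X11 X12 X21 X22 v).fst = X11 v.fst + X12 v.snd := rfl

lemma blockOp_apply_snd (X11 : HC →L[ℂ] HC) (X12 : HA →L[ℂ] HC)
    (X21 : HC →L[ℂ] HA) (X22 : HA →L[ℂ] HA) (v : HilbSum HC HA) :
    (blockOp X11 X12 X21 X22 v).snd = X21 v.fst + X22 v.snd := rfl

lemma hilbSum_ext {v w : HilbSum HC HA} (h1 : v.fst = w.fst) (h2 : v.snd = w.snd) : v = w :=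
  WithLp.ofLp_injective 2 (Prod.ext h1 h2)

lemma blockOp_comp (a : HC →L[ℂ] HC) (b : HA →L[ℂ] HC) (c : HC →L[ℂ] HA) (e : HA →L[ℂ] HA)
    (a' : HC →L[ℂ] HC) (b' : HA →L[ℂ] HC) (c' : HC →L[ℂ] HA) (e' : HA →L[ℂ] HA) :
    blockOp a b c e ∘L blockOp a' b' c' e' =
      blockOp (a ∘L a' + b ∘L c') (a ∘L b' + b ∘L e') (c ∘L a' + e ∘L c') (c ∘L b' + e ∘L e') := by
  ext v
  exact hilbSum_ext (by simp [blockOp_apply_fst, blockOp_apply_snd]; abel) (by simp [blockOp_apply_fst, blockOp_apply_snd]; abel)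

lemma blockOp_one : blockOp (1 : HC →L[ℂ] HC) 0 0 (1 : HA →L[ℂ] HA) = 1 := by
  ext v
  exact hilbSum_ext (by simp [blockOp_apply_fst]) (by simp [blockOp_apply_snd])

lemma blockOp_add (a : HC →L[ℂ] HC) (b : HA →L[ℂ] HC) (c : HC →L[ℂ] HA) (e : HA →L[ℂ] HA)
    (a' : HC →L[ℂ] HC) (b' : HA →L[ℂ] HC) (c' : HC →L[ℂ] HA) (e' : HA →L[ℂ] HA) :
    blockOp a b c e + blockOp a' b' c' e' = blockOp (a + a') (b + b') (c + c') (e + e') := by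
  ext v
  exact hilbSum_ext (by simp [blockOp_apply_fst]; abel) (by simp [blockOp_apply_snd]; abel)

lemma blockOp_adjoint (a : HC →L[ℂ] HC) (b : HA →L[ℂ] HC) (c : HC →L[ℂ] HA) (e : HA →L[ℂ] HA) :
    adjoint (blockOp a b c e) = blockOp (adjoint a) (adjoint c) (adjoint b) (adjoint e) := by
  symm
  rw [ContinuousLinearMap.eq_adjoint_iff]
  intro x y
  simp only [WithLp.prod_inner_apply, WithLp.ofLp_fst, WithLp.ofLp_snd, blockOp_apply_fst, blockOp_apply_snd, inner_add_left,
    inner_add_right, adjoint_inner_left]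
  ring

end BlockLemmas
section Main
set_option linter.unusedSectionVars false
variable {HC HA : Type*} [NormedAddCommGroup HC] [InnerProductSpace ℂ HC] [CompleteSpace HC]
  [NormedAddCommGroup HA] [InnerProductSpace ℂ HA] [CompleteSpace HA]

lemma blockOp_zero : blockOp (0 : HC →L[ℂ] HC) 0 0 (0 : HA →L[ℂ] HA) = 0 := by
  ext v
  exact hilbSum_ext (by simp [blockOp_apply_fst]) (by simp [blockOp_apply_snd])

lemma blockOp_diag_sum {ι : Type*} (s : Finset ι) (f : ι → HA →L[ℂ] HA) :
    ∑ i ∈ s, blockOp (0 : HC →L[ℂ] HC) 0 0 (f i) = blockOp 0 0 0 (∑ i ∈ s, f i) := by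
  induction s using Finset.cons_induction with
  | empty => simp [blockOp_zero]
  | cons a s h ih => rw [Finset.sum_cons, Finset.sum_cons, ih, blockOp_add]; simp

lemma cpMap_one_eq {d : ℕ} (T : Fin d → H →L[ℂ] H) : cpMap T 1 = ∑ i, T i ∘L adjoint (T i) := by
  simp [cpMap, ContinuousLinearMap.one_def, ContinuousLinearMap.id_comp]

lemma cpMap_sub {d : ℕ} (T : Fin d → H →L[ℂ] H) (X Y : H →L[ℂ] H) :
    cpMap T (X - Y) = cpMap T X - cpMap T Y := by
  simp [cpMap, sub_comp, comp_sub, Finset.sum_sub_distrib]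

lemma blockE_conj {d : ℕ} (C : Fin d → HC →L[ℂ] HC) (A : Fin d → HA →L[ℂ] HA)
    (B : Fin d → HC →L[ℂ] HA) (i : Fin d) (X : HA →L[ℂ] HA) :
    blockOp (C i) 0 (B i) (A i) ∘L blockOp 0 0 0 X ∘L adjoint (blockOp (C i) 0 (B i) (A i)) =
      blockOp 0 0 0 (A i ∘L X ∘L adjoint (A i)) := by
  rw [blockOp_adjoint, blockOp_comp, blockOp_comp]
  simp

lemma iterE {d : ℕ} (C : Fin d → HC →L[ℂ] HC) (A : Fin d → HA →L[ℂ] HA)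
    (B : Fin d → HC →L[ℂ] HA)
    (hE : ∑ i, blockOp (C i) 0 (B i) (A i) ∘L adjoint (blockOp (C i) 0 (B i) (A i)) = 1)
    (n : ℕ) :
    (cpMap (fun i => blockOp (C i) 0 (B i) (A i)))^[n] (blockOp (1 : HC →L[ℂ] HC) 0 0 0) =
      1 - blockOp 0 0 0 ((cpMap A)^[n] 1) := by
  induction n with
  | zero =>
    simp only [Function.iterate_zero, id_eq]
    rw [eq_sub_iff_add_eq, blockOp_add]
    simpa using blockOp_one
  | succ n ih =>
    rw [Function.iterate_succ_apply', Function.iterate_succ_apply', ih, cpMap_sub]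
    have h1 : cpMap (fun i => blockOp (C i) 0 (B i) (A i)) 1 = 1 := by
      rw [cpMap_one_eq]; exact hE
    have h2 : cpMap (fun i => blockOp (C i) 0 (B i) (A i)) (blockOp 0 0 0 ((cpMap A)^[n] 1)) =
        blockOp 0 0 0 (cpMap A ((cpMap A)^[n] 1)) := by
      unfold cpMap
      rw [Finset.sum_congr rfl (fun i _ => blockE_conj C A B i _), blockOp_diag_sum]
    rw [h1, h2]

end Main
section Words
variable {d : ℕ}

lemma opWord_cons (T : Fin d → H →L[ℂ] H) (i : Fin d) (l : List (Fin d)) :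
    opWord T (i :: l) = T i ∘L opWord T l := rfl

lemma cpMap_iter_one (T : Fin d → H →L[ℂ] H) (n : ℕ) :
    (cpMap T)^[n] 1 =
      ∑ α : Fin n → Fin d, opWord T (List.ofFn α) ∘L adjoint (opWord T (List.ofFn α)) := by
  induction n with
  | zero =>
    simp [opWord, List.ofFn_zero, ContinuousLinearMap.one_def, ContinuousLinearMap.adjoint_id]
  | succ n ih =>
    rw [Function.iterate_succ_apply', ih]
    unfold cpMap
    rw [← (Fin.consEquiv (fun _ : Fin (n+1) => Fin d)).sum_comp]
    rw [Fintype.sum_prod_type]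
    refine Finset.sum_congr rfl fun i _ => ?_
    simp only [Fin.consEquiv_apply, List.ofFn_succ, Fin.cons_zero, Fin.cons_succ, opWord_cons,
      ← ContinuousLinearMap.star_eq_adjoint, star_mul, ← ContinuousLinearMap.mul_def, Finset.mul_sum, Finset.sum_mul, mul_assoc]

end Words
section Pos
variable {d : ℕ}

lemma cpMap_isPositive (T : Fin d → H →L[ℂ] H) {X : H →L[ℂ] H} (hX : X.IsPositive) :
    (cpMap T X).IsPositive := by
  unfold cpMap
  exact Finset.sum_induction _ _ (fun a b ha hb => ha.add hb)
    ContinuousLinearMap.isPositive_zero (fun i _ => hX.conj_adjoint (T i))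

lemma cpMap_mono (T : Fin d → H →L[ℂ] H) {X Y : H →L[ℂ] H} (h : X ≤ Y) :
    cpMap T X ≤ cpMap T Y := by
  rw [ContinuousLinearMap.le_def] at h ⊢
  have hp := cpMap_isPositive T h
  rwa [cpMap_sub] at hp

lemma iter_isPositive (T : Fin d → H →L[ℂ] H) (n : ℕ) : ((cpMap T)^[n] 1).IsPositive := by
  induction n with
  | zero => simpa using ContinuousLinearMap.isPositive_one
  | succ n ih => rw [Function.iterate_succ_apply']; exact cpMap_isPositive T ih

lemma iter_le_one (T : Fin d → H →L[ℂ] H) (hT : IsRowContraction T) (n : ℕ) :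
    (cpMap T)^[n] 1 ≤ 1 := by
  induction n with
  | zero => simp
  | succ n ih =>
    rw [Function.iterate_succ_apply']
    calc cpMap T ((cpMap T)^[n] 1) ≤ cpMap T 1 := cpMap_mono T ih
    _ ≤ 1 := by rw [cpMap_one_eq]; exact hT

/-- For `0 ≤ X ≤ 1`:  ‖X h‖² ≤ re ⟪X h, h⟫. -/
lemma norm_sq_le_re_inner {X : H →L[ℂ] H} (hX : X.IsPositive) (hX1 : X ≤ 1) (h : H) :
    ‖X h‖ ^ 2 ≤ RCLike.re (inner ℂ (X h) h : ℂ) := by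
  have hX0 : (0 : H →L[ℂ] H) ≤ X := (ContinuousLinearMap.nonneg_iff_isPositive X).mpr hX
  set S := CFC.sqrt X with hSdef
  have hS0 : (0 : H →L[ℂ] H) ≤ S := CFC.sqrt_nonneg X
  have hSsa : IsSelfAdjoint S := hS0.isSelfAdjoint
  have hSsq : S ∘L S = X := by
    have := CFC.sq_sqrt X hX0
    rw [sq] at this
    simpa [ContinuousLinearMap.mul_def] using this
  have hXnorm : ‖X‖ ≤ 1 := (CStarAlgebra.norm_le_one_iff_of_nonneg X hX0).mpr hX1
  have hSnorm : ‖S‖ ≤ 1 := by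
    have h1 : ‖S‖ * ‖S‖ = ‖X‖ := by
      rw [← CStarRing.norm_star_mul_self (x := S), hSsa.star_eq, ContinuousLinearMap.mul_def, hSsq]
    nlinarith [norm_nonneg S, norm_nonneg X]
  have key : RCLike.re (inner ℂ (X h) h : ℂ) = ‖S h‖ ^ 2 := by
    rw [← hSsq]
    have : inner ℂ (S (S h)) h = (inner ℂ (S h) (S h) : ℂ) := by
      rw [← ContinuousLinearMap.adjoint_inner_left]
      rw [(ContinuousLinearMap.isSelfAdjoint_iff' (A := S)).mp hSsa]
    rw [ContinuousLinearMap.comp_apply, this]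
    rw [inner_self_eq_norm_sq]
  rw [key]
  have : ‖X h‖ ≤ ‖S h‖ := by
    calc ‖X h‖ = ‖S (S h)‖ := by rw [← hSsq]; rfl
    _ ≤ ‖S‖ * ‖S h‖ := S.le_opNorm _
    _ ≤ 1 * ‖S h‖ := by gcongr
    _ = ‖S h‖ := one_mul _
  have h0 : (0:ℝ) ≤ ‖S h‖ := norm_nonneg _
  nlinarith [norm_nonneg (X h)]

end Pos
open Filter in
lemma sum_norm_eq {d : ℕ} (T : Fin d → H →L[ℂ] H) (n : ℕ) (h : H) :
    ∑ α : Fin n → Fin d, ‖adjoint (opWord T (List.ofFn α)) h‖ ^ 2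
      = RCLike.re (inner ℂ (((cpMap T)^[n] 1) h) h : ℂ) := by
  rw [cpMap_iter_one, ContinuousLinearMap.sum_apply, sum_inner, map_sum]
  refine Finset.sum_congr rfl fun α _ => ?_
  rw [ContinuousLinearMap.comp_apply, ← ContinuousLinearMap.adjoint_adjoint (opWord T (List.ofFn α)),
    ContinuousLinearMap.adjoint_inner_left, ContinuousLinearMap.adjoint_adjoint]
  exact (inner_self_eq_norm_sq _).symm

section Final
variable {HC HA : Type*} [NormedAddCommGroup HC] [InnerProductSpace ℂ HC] [CompleteSpace HC]
  [NormedAddCommGroup HA] [InnerProductSpace ℂ HA] [CompleteSpace HA]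

open Filter Topology

lemma tendsto_hilbSum_zero_iff (w : ℕ → HilbSum HC HA) :
    Tendsto w atTop (nhds 0) ↔
      (Tendsto (fun n => (w n).fst) atTop (nhds 0) ∧
       Tendsto (fun n => (w n).snd) atTop (nhds 0)) := by
  set e := WithLp.prodContinuousLinearEquiv 2 ℂ HC HA with he
  constructor
  · intro hw
    have h1 : Tendsto (fun n => e (w n)) atTop (nhds (e 0)) :=
      ((e.continuous.tendsto 0).comp hw)
    rw [map_zero] at h1
    exact ⟨h1.fst_nhds, h1.snd_nhds⟩
  · rintro ⟨h1, h2⟩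
    have h3 : Tendsto (fun n => ((w n).fst, (w n).snd)) atTop (nhds ((0 : HC), (0 : HA))) :=
      h1.prodMk_nhds h2
    have h4 : Tendsto (fun n => e.symm ((w n).fst, (w n).snd)) atTop (nhds (e.symm (0, 0))) :=
      (e.symm.continuous.tendsto _).comp h3
    have h5 : ∀ n, e.symm ((w n).fst, (w n).snd) = w n := fun n => rfl
    have h6 : e.symm ((0 : HC), (0 : HA)) = (0 : HilbSum HC HA) := rfl
    simpa [h5, h6] using h4

lemma main_equiv {d : ℕ}
    (C : Fin d → HC →L[ℂ] HC) (A : Fin d → HA →L[ℂ] HA) (B : Fin d → HC →L[ℂ] HA)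
    (hA : IsRowContraction A)
    (hE : ∑ i, blockOp (C i) 0 (B i) (A i) ∘L adjoint (blockOp (C i) 0 (B i) (A i)) = 1) :
    IsStarStable A ↔
      ∀ v : HilbSum HC HA,
        Tendsto (fun n : ℕ =>
            ((cpMap (fun i => blockOp (C i) 0 (B i) (A i)))^[n] (blockOp (1 : HC →L[ℂ] HC) 0 0 0)) v)
          atTop (nhds v) := by
  have hiter := iterE C A B hE
  constructor
  · intro hstab v
    have hX : ∀ a : HA, Tendsto (fun n => ((cpMap A)^[n] 1) a) atTop (nhds 0) := by
      intro a
      have hre : Tendsto (fun n => RCLike.re (inner ℂ (((cpMap A)^[n] 1) a) a : ℂ)) atTop (nhds 0) := by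
        have := hstab a
        simpa only [sum_norm_eq] using this
      rw [tendsto_zero_iff_norm_tendsto_zero]
      have hsq : Tendsto (fun n => ‖((cpMap A)^[n] 1) a‖ ^ 2) atTop (nhds 0) :=
        squeeze_zero (fun n => by positivity)
          (fun n => norm_sq_le_re_inner (iter_isPositive A n) (iter_le_one A hA n) a) hre
      have := hsq.sqrt
      simpa [Real.sqrt_sq (norm_nonneg _)] using this
    simp only [hiter, ContinuousLinearMap.sub_apply, ContinuousLinearMap.one_apply]
    have h0 : Tendsto (fun n => blockOp (0 : HC →L[ℂ] HC) 0 0 ((cpMap A)^[n] 1) v)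
        atTop (nhds 0) := by
      rw [tendsto_hilbSum_zero_iff]
      constructor
      · simpa [blockOp_apply_fst] using (tendsto_const_nhds : Tendsto (fun _ : ℕ => (0:HC)) atTop _)
      · simpa [blockOp_apply_snd] using hX v.snd
    have := h0.const_sub v
    simpa using this
  · intro hconv h
    set v : HilbSum HC HA := (WithLp.equiv 2 (HC × HA)).symm (0, h) with hv
    have h1 := hconv v
    simp only [hiter, ContinuousLinearMap.sub_apply, ContinuousLinearMap.one_apply] at h1
    have h2 := (tendsto_const_nhds (x := v) (f := atTop)).sub h1
    simp only [sub_sub_cancel, sub_self] at h2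
    have h3 := (tendsto_hilbSum_zero_iff _).mp h2 |>.2
    have hXa : Tendsto (fun n => ((cpMap A)^[n] 1) h) atTop (nhds 0) := by
      have hsnd : ∀ n, (blockOp (0 : HC →L[ℂ] HC) 0 0 ((cpMap A)^[n] 1) v).snd
          = ((cpMap A)^[n] 1) h := by
        intro n
        rw [blockOp_apply_snd]
        simp [hv]
      simpa only [hsnd] using h3
    simp only [sum_norm_eq]
    refine squeeze_zero (fun n => (RCLike.nonneg_iff.mp ((iter_isPositive A n).inner_nonneg_left h)).1)
      (fun n => le_trans (RCLike.re_le_norm _) (norm_inner_le_norm _ _)) ?_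
    have := (tendsto_zero_iff_norm_tendsto_zero.mp hXa).mul_const ‖h‖
    simpa using this

end Final

/-- for a coisometric lifting, `A` is *-stable iff `Φ_E^n(p_C) → 1` (SOT). -/
theorem stmt9 {d : ℕ} (hd : 1 ≤ d)
    (C : Fin d → HC →L[ℂ] HC) (A : Fin d → HA →L[ℂ] HA) (B : Fin d → HC →L[ℂ] HA)
    (hC : IsRowContraction C) (hA : IsRowContraction A)
    (hE : ∑ i, blockOp (C i) 0 (B i) (A i) ∘L adjoint (blockOp (C i) 0 (B i) (A i)) = 1) :
    IsStarStable A ↔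
      ∀ v : HilbSum HC HA,
        Filter.Tendsto
          (fun n : ℕ =>
            ((cpMap (fun i => blockOp (C i) 0 (B i) (A i)))^[n]
              (blockOp (1 : HC →L[ℂ] HC) 0 0 0)) v)
          Filter.atTop (nhds v) :=
  main_equiv C A B hA hE

end
end

section
/- Let d ≥ 1, let R = (R_1,…,R_d) be a coisometric row contraction on a complex Hilbert space H, let K be a complex Hilbert space containing H as a closed subspace, and let V_1,…,V_d be isometries on K with pairwise orthogonal ranges such that V_i* H ⊆ H with V_i*|_H = R_i* for all i, and such that the linear span of { V_α h : α a multi-index, h ∈ H } is dense in K (i.e. V is a minimal isometric dilation of R). Then ∑_{i=1}^d V_i V_i* = 1, i.e. V is also coisometric. -/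
set_option synthInstance.maxHeartbeats 1000000
set_option maxHeartbeats 1000000
noncomputable section

open ContinuousLinearMap

variable {d : ℕ}
variable {H : Type*} [NormedAddCommGroup H] [InnerProductSpace ℂ H] [CompleteSpace H]

variable {K : Type*} [NormedAddCommGroup K] [InnerProductSpace ℂ K] [CompleteSpace K]

/-- a minimal isometric dilation of a coisometric row contraction is
coisometric. -/
theorem stmt16 {d : ℕ} (hd : 1 ≤ d) (Hs : Submodule ℂ K) [CompleteSpace Hs]
    (R : Fin d → Hs →L[ℂ] Hs) (hR : ∑ i, R i ∘L adjoint (R i) = 1)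
    (V : Fin d → K →L[ℂ] K)
    (hiso : ∀ i, adjoint (V i) ∘L V i = 1)
    (horth : ∀ i j, i ≠ j → adjoint (V i) ∘L V j = 0)
    (hdil : ∀ i, ∀ h : Hs, adjoint (V i) (h : K) = ((adjoint (R i) h : Hs) : K))
    (hmin : Dense
      ((Submodule.span ℂ {k : K | ∃ (α : List (Fin d)) (h : Hs), k = opWord V α (h : K)}
        : Submodule ℂ K) : Set K)) :
    ∑ i, V i ∘L adjoint (V i) = 1 := by
  set P : K →L[ℂ] K := ∑ i, V i ∘L adjoint (V i) with hP
  -- P fixes everything in the range of each V j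
  have hPV : ∀ (j : Fin d) (x : K), P (V j x) = V j x := by
    intro j x
    have hterm : ∀ i : Fin d,
        (V i ∘L adjoint (V i)) (V j x) = if i = j then V j x else 0 := by
      intro i
      by_cases h : i = j
      · subst h
        have h1 : (adjoint (V i) ∘L V i) x = (1 : K →L[ℂ] K) x := by rw [hiso i]
        simp only [ContinuousLinearMap.comp_apply, ContinuousLinearMap.one_apply] at h1
        simp [ContinuousLinearMap.comp_apply, h1]
      · have h1 : (adjoint (V i) ∘L V j) x = (0 : K →L[ℂ] K) x := by rw [horth i j h]
        simp only [ContinuousLinearMap.comp_apply, ContinuousLinearMap.zero_apply] at h1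
        simp [ContinuousLinearMap.comp_apply, h1, h]
    simp only [hP, ContinuousLinearMap.sum_apply]
    rw [Finset.sum_congr rfl (fun i _ => hterm i)]
    simp
  -- P is idempotent
  have hidem : ∀ x : K, P (P x) = P x := by
    intro x
    have h1 : P x = ∑ i, V i (adjoint (V i) x) := by
      simp [hP, ContinuousLinearMap.sum_apply, ContinuousLinearMap.comp_apply]
    rw [h1, map_sum]
    simp only [hPV]
  -- P fixes Hs
  have hfix : ∀ h : Hs, P (h : K) = (h : K) := by
    intro h
    have hc : inner (𝕜 := ℂ) ((h : K)) (P (h : K)) = inner (𝕜 := ℂ) (h : K) (h : K) := by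
      have h1 : P (h : K) = ∑ i, V i (adjoint (V i) (h : K)) := by
        simp [hP, ContinuousLinearMap.sum_apply, ContinuousLinearMap.comp_apply]
      rw [h1, inner_sum]
      have h2 : ∀ i : Fin d, inner (𝕜 := ℂ) ((h : K)) (V i (adjoint (V i) (h : K)))
          = inner (𝕜 := ℂ) (h : Hs) ((R i) (adjoint (R i) h)) := by
        intro i
        rw [← ContinuousLinearMap.adjoint_inner_left (V i), hdil i h]
        have := Submodule.coe_inner Hs (adjoint (R i) h) (adjoint (R i) h)
        rw [← this]
        exact ContinuousLinearMap.adjoint_inner_left (R i) _ _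
      rw [Finset.sum_congr rfl (fun i _ => h2 i), ← inner_sum]
      have h3 : (∑ i, (R i) ((adjoint (R i)) h)) = h := by
        have := congrArg (fun (A : Hs →L[ℂ] Hs) => A h) hR
        simpa [ContinuousLinearMap.sum_apply, ContinuousLinearMap.comp_apply] using this
      rw [h3, Submodule.coe_inner]
    -- now show P h = h
    have hPPh : inner (𝕜 := ℂ) (P (h : K)) (P (h : K))
        = inner (𝕜 := ℂ) ((h : K)) (P (h : K)) := by
      have hsa : adjoint P = P := by
        simp [hP, map_sum, ContinuousLinearMap.adjoint_comp, adjoint_adjoint]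
      calc inner (𝕜 := ℂ) (P (h : K)) (P (h : K))
          = inner (𝕜 := ℂ) (adjoint P (h : K)) (P (h : K)) := by rw [hsa]
        _ = inner (𝕜 := ℂ) ((h : K)) (P (P (h : K))) :=
            ContinuousLinearMap.adjoint_inner_left P _ _
        _ = inner (𝕜 := ℂ) ((h : K)) (P (h : K)) := by rw [hidem]
    have hsub : inner (𝕜 := ℂ) (P (h : K) - (h : K)) (P (h : K) - (h : K)) = 0 := by
      rw [inner_sub_sub_self, hPPh, hc]
      have hconj : inner (𝕜 := ℂ) (P (h : K)) ((h : K))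
          = starRingEnd ℂ (inner (𝕜 := ℂ) ((h : K)) (P (h : K))) := (inner_conj_symm _ _).symm
      rw [hconj, hc, inner_conj_symm]
      ring
    exact sub_eq_zero.mp (inner_self_eq_zero.mp hsub)
  -- P fixes every opWord V α h
  have hfix2 : ∀ (α : List (Fin d)) (h : Hs), P (opWord V α (h : K)) = opWord V α (h : K) := by
    intro α h
    induction α with
    | nil => simpa [opWord] using hfix h
    | cons j β ih =>
      have hcons : opWord V (j :: β) (h : K) = V j (opWord V β (h : K)) := by
        simp [opWord, List.prod_cons, ContinuousLinearMap.mul_apply]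
      rw [hcons, hPV]
  -- conclude by density
  have hspan : ∀ x ∈ (Submodule.span ℂ
      {k : K | ∃ (α : List (Fin d)) (h : Hs), k = opWord V α (h : K)}), P x = x := by
    intro x hx
    induction hx using Submodule.span_induction with
    | mem x hx => obtain ⟨α, h, rfl⟩ := hx; exact hfix2 α h
    | zero => simp
    | add x y _ _ hx hy => rw [map_add, hx, hy]
    | smul c x _ hx => rw [map_smul, hx]
  have heq : (⇑P : K → K) = _root_.id :=
    Continuous.ext_on hmin P.continuous continuous_id (fun x hx => hspan x hx)
  ext x
  have := congrFun heq x
  simpa [hP] using this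

end
end
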